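/- Let X and Y be topological discrete gtses (i.e., gtses in which every subset is open and every family of open sets is admissible, with all subsets open). Then the GTS-product X ×_GTS Y is a topological discrete gts: every subset of X × Y is open and every family of subsets of X × Y is an admissible covering. -/

import Mathlib

open Set TopologicalSpace Topology

universe u

/-- A generalized topology in the sense of Delfs–Knebusch (axioms following
Piękosz, Definition 2.2.1): `Cov` is the collection of admissible open families,
and the open sets are the members of `⋃₀ Cov`. -/
structure GenTop (X : Type u) : Type u where
  Cov : Set (Set (Set X))
  univ_open : Set.univ ∈ ⋃₀ Cov
  finite_admissible : ∀ 𝒰 : Set (Set X), 𝒰.Finite → 𝒰 ⊆ ⋃₀ Cov → 𝒰 ∈ Cov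
  union_open : ∀ 𝒰 ∈ Cov, ⋃₀ 𝒰 ∈ ⋃₀ Cov
  restrict : ∀ 𝒰 ∈ Cov, ∀ V ∈ ⋃₀ Cov, (fun U => V ∩ U) '' 𝒰 ∈ Cov
  transitive : ∀ 𝒰 ∈ Cov, ∀ f : Set X → Set (Set X),
    (∀ U ∈ 𝒰, f U ∈ Cov ∧ ⋃₀ f U = U) → {V : Set X | ∃ U ∈ 𝒰, V ∈ f U} ∈ Cov
  coarsen : ∀ 𝒰 ∈ Cov, ∀ 𝒱 ⊆ ⋃₀ Cov, (∀ U ∈ 𝒰, ∃ V ∈ 𝒱, U ⊆ V) →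
    ⋃₀ 𝒱 = ⋃₀ 𝒰 → 𝒱 ∈ Cov
  regular : ∀ 𝒰 ∈ Cov, ∀ W ⊆ ⋃₀ 𝒰, (∀ U ∈ 𝒰, W ∩ U ∈ ⋃₀ Cov) → W ∈ ⋃₀ Cov

namespace GenTop

variable {X : Type u} (G : GenTop X)

/-- The open sets of a gts. -/
def Opens : Set (Set X) := ⋃₀ G.Cov

/-- The closed sets of a gts. -/
def Closeds : Set (Set X) := {A : Set X | Aᶜ ∈ G.Opens}

/-- The topologization of a gts: the topology generated by the open sets. -/
def topol : TopologicalSpace X := TopologicalSpace.generateFrom G.Opens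

/-- A gts is weakly normal if disjoint sets, each a singleton or closed,
can be separated by disjoint open sets. -/
def WeaklyNormal : Prop :=
  ∀ A₁ A₂ : Set X, ((∃ x, A₁ = {x}) ∨ A₁ ∈ G.Closeds) →
    ((∃ x, A₂ = {x}) ∨ A₂ ∈ G.Closeds) → Disjoint A₁ A₂ →
    ∃ W₁ ∈ G.Opens, ∃ W₂ ∈ G.Opens, Disjoint W₁ W₂ ∧ A₁ ⊆ W₁ ∧ A₂ ⊆ W₂

end GenTop

/-- The generating collection for the GTS-product generalized topology: the
preimages under the projections of the admissible families of the factors. -/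
def prodGen {X Y : Type u} (GX : GenTop X) (GY : GenTop Y) :
    Set (Set (Set (X × Y))) :=
  {𝒲 | (∃ 𝒰 ∈ GX.Cov, 𝒲 = (fun U => Prod.fst ⁻¹' U) '' 𝒰) ∨
       (∃ 𝒱 ∈ GY.Cov, 𝒲 = (fun V => Prod.snd ⁻¹' V) '' 𝒱)}

/-- The GTS-product of two topological discrete gtses (every family of subsets
is admissible) is a topological discrete gts. -/
theorem stmt_10 {X Y : Type u} (GX : GenTop X) (GY : GenTop Y)
    (hX : GX.Cov = Set.univ) (hY : GY.Cov = Set.univ)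
    (P : GenTop (X × Y))
    (hPge : prodGen GX GY ⊆ P.Cov)
    (hPmin : ∀ Q : GenTop (X × Y), prodGen GX GY ⊆ Q.Cov → P.Cov ⊆ Q.Cov) :
    (∀ W : Set (X × Y), W ∈ P.Opens) ∧ P.Cov = Set.univ := by
  clear hPmin
  -- the empty set is open
  have hemptyCov : (∅ : Set (Set (X × Y))) ∈ P.Cov :=
    P.finite_admissible ∅ Set.finite_empty (Set.empty_subset _)
  have hemptyOpen : (∅ : Set (X × Y)) ∈ P.Opens := by
    have := P.union_open ∅ hemptyCov
    simpa [GenTop.Opens] using this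
  -- preimage families are admissible
  have hfst : ∀ 𝒰 : Set (Set X), (fun U => Prod.fst ⁻¹' U) '' 𝒰 ∈ P.Cov := by
    intro 𝒰
    exact hPge (Or.inl ⟨𝒰, by rw [hX]; trivial, rfl⟩)
  have hsnd : ∀ 𝒱 : Set (Set Y), (fun V => Prod.snd ⁻¹' V) '' 𝒱 ∈ P.Cov := by
    intro 𝒱
    exact hPge (Or.inr ⟨𝒱, by rw [hY]; trivial, rfl⟩)
  -- sUnion of an intersection-image family
  have hsun : ∀ (V : Set (X × Y)) (A : Set (Set (X × Y))),
      ⋃₀ ((fun U => V ∩ U) '' A) = V ∩ ⋃₀ A := by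
    intro V A
    ext p
    simp only [Set.sUnion_image, Set.mem_iUnion, Set.mem_inter_iff, Set.mem_sUnion]
    tauto
  -- the family of all column families
  set S1X : Set (Set X) := Set.range (fun x : X => ({x} : Set X)) with hS1X
  set S1Y : Set (Set Y) := Set.range (fun y : Y => ({y} : Set Y)) with hS1Y
  have hS1Xcov : (fun U => Prod.fst ⁻¹' U) '' S1X ∈ P.Cov := hfst S1X
  have hS1Ycov : (fun V => Prod.snd ⁻¹' V) '' S1Y ∈ P.Cov := hsnd S1Y
  have hsunY : ⋃₀ ((fun V => Prod.snd ⁻¹' V) '' S1Y) = (Set.univ : Set (X × Y)) := by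
    ext p
    simp only [Set.sUnion_image, Set.mem_iUnion, Set.mem_univ, iff_true, hS1Y]
    exact ⟨{p.2}, ⟨p.2, rfl⟩, rfl⟩
  -- the family of all singletons of X × Y is admissible
  have hSAll : Set.range (fun p : X × Y => ({p} : Set (X × Y))) ∈ P.Cov := by
    have key := P.transitive _ hS1Xcov
      (fun U => (fun W => U ∩ W) '' ((fun V => Prod.snd ⁻¹' V) '' S1Y))
      (by
        intro U hU
        constructor
        · exact P.restrict _ hS1Ycov U ⟨_, hS1Xcov, hU⟩
        · rw [hsun, hsunY, Set.inter_univ])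
    have heq : {V : Set (X × Y) | ∃ U ∈ (fun U => Prod.fst ⁻¹' U) '' S1X,
        V ∈ (fun W => U ∩ W) '' ((fun V => Prod.snd ⁻¹' V) '' S1Y)}
        = Set.range (fun p : X × Y => ({p} : Set (X × Y))) := by
      ext V
      simp only [Set.mem_setOf_eq, Set.mem_image, Set.mem_range, hS1X, hS1Y]
      constructor
      · rintro ⟨U, ⟨U₀, ⟨x, rfl⟩, rfl⟩, W, ⟨W₀, ⟨y, rfl⟩, rfl⟩, rfl⟩
        refine ⟨(x, y), ?_⟩
        ext p
        simp [Prod.ext_iff, eq_comm, and_comm]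
      · rintro ⟨p, rfl⟩
        refine ⟨Prod.fst ⁻¹' {p.1}, ⟨{p.1}, ⟨p.1, rfl⟩, rfl⟩,
          Prod.snd ⁻¹' {p.2}, ⟨{p.2}, ⟨p.2, rfl⟩, rfl⟩, ?_⟩
        ext q
        simp [Prod.ext_iff, eq_comm]
    rw [heq] at key
    exact key
  have hsing : ∀ p : X × Y, ({p} : Set (X × Y)) ∈ P.Opens :=
    fun p => ⟨_, hSAll, ⟨p, rfl⟩⟩
  have hsunAll : ⋃₀ Set.range (fun p : X × Y => ({p} : Set (X × Y))) = Set.univ := by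
    ext p
    simp only [Set.sUnion_range, Set.mem_iUnion, Set.mem_singleton_iff, Set.mem_univ, iff_true]
    exact ⟨p, rfl⟩
  -- every set is open
  have hopen : ∀ W : Set (X × Y), W ∈ P.Opens := by
    intro W
    apply P.regular _ hSAll W (by rw [hsunAll]; exact Set.subset_univ W)
    rintro U ⟨p, rfl⟩
    by_cases hp : p ∈ W
    · have : W ∩ {p} = {p} := by
        ext q; simp only [Set.mem_inter_iff, Set.mem_singleton_iff]
        constructor
        · exact fun h => h.2
        · rintro rfl; exact ⟨hp, rfl⟩
      rw [this]; exact hsing p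
    · have : W ∩ {p} = ∅ := by
        ext q; simp only [Set.mem_inter_iff, Set.mem_singleton_iff, Set.mem_empty_iff_false,
          iff_false, not_and]
        rintro hq rfl; exact hp hq
      rw [this]; exact hemptyOpen
  refine ⟨hopen, ?_⟩
  -- every family is admissible
  ext 𝒲
  simp only [Set.mem_univ, iff_true]
  rcases eq_or_ne 𝒲 ∅ with rfl | hne
  · exact hemptyCov
  obtain ⟨V₀, hV₀⟩ := Set.nonempty_iff_ne_empty.mpr hne
  set S : Set (X × Y) := ⋃₀ 𝒲 with hS
  have hfam : (fun U => S ∩ U) '' Set.range (fun p : X × Y => ({p} : Set (X × Y))) ∈ P.Cov :=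
    P.restrict _ hSAll S (hopen S)
  apply P.coarsen _ hfam 𝒲 (fun V _ => hopen V)
  · rintro U ⟨W, ⟨p, rfl⟩, rfl⟩
    by_cases hp : p ∈ S
    · obtain ⟨V, hV, hpV⟩ := hp
      refine ⟨V, hV, ?_⟩
      rintro q ⟨_, rfl⟩
      exact hpV
    · refine ⟨V₀, hV₀, ?_⟩
      rintro q ⟨hq, rfl⟩
      exact absurd hq hp
  · rw [hsun, hsunAll, Set.inter_univ]
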